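/- (Key cross-ratio identity in the proof of Pascal's Lemma I.) Let P, V, N, O, K, Q be six pairwise distinct points on a circle 𝒞 of ℝ². Suppose the lines PK and VO meet in a point M, the lines NK and VQ meet in a point S, the lines PK and VQ meet in a point A, the lines NO and PK meet in a point α, and the lines NO and VQ meet in a point β. Then AM·αP·βS·AQ = αM·AP·AS·βQ; that is, the ratio AM/αM composed with αP/AP equals the ratio AS/βS composed with βQ/AQ. -/

import Mathlib

noncomputable section

open EuclideanGeometry

abbrev Pt : Type := EuclideanSpace ℝ (Fin 2)

/-- The affine line through two points of the Euclidean plane. -/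
def lineThrough (x y : Pt) : AffineSubspace ℝ Pt := affineSpan ℝ {x, y}

/-- A subset of the plane is a line if it is the affine span of two distinct points. -/
def IsLine (s : AffineSubspace ℝ Pt) : Prop := ∃ x y : Pt, x ≠ y ∧ s = lineThrough x y

lemma mem_line_iff {x y z : Pt} : z ∈ lineThrough x y ↔ ∃ t : ℝ, z = x + t • (y - x) := by
  have h : z = (z - x) +ᵥ x := by simp
  rw [lineThrough, show (affineSpan ℝ {x, y} : AffineSubspace ℝ Pt) = line[ℝ, x, y] from rfl]
  constructor
  · intro hz
    rw [h] at hz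
    obtain ⟨r, hr⟩ := (vadd_left_mem_affineSpan_pair).mp hz
    exact ⟨r, by rw [vsub_eq_sub] at hr; rw [hr]; abel⟩
  · rintro ⟨t, rfl⟩
    have : t • (y -ᵥ x) +ᵥ x = x + t • (y - x) := by simp [vsub_eq_sub, vadd_eq_add]; abel
    rw [← this]
    exact AffineMap.lineMap_mem_affineSpan_pair t x y

lemma comb_mem {L : AffineSubspace ℝ Pt} {x y : Pt} (hx : x ∈ L) (hy : y ∈ L) (t : ℝ) :
    x + t • (y - x) ∈ L := by
  have h := L.smul_vsub_vadd_mem t hy hx hx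
  simpa [vsub_eq_sub, vadd_eq_add, add_comm] using h

lemma dist_coord (x u : Pt) (a b : ℝ) : dist (x + a • u) (x + b • u) = |a - b| * ‖u‖ := by
  rw [dist_add_left, dist_eq_norm, ← sub_smul, norm_smul, Real.norm_eq_abs]

lemma reparam {P K x y z : Pt} (hx : x ∈ lineThrough P K) (hy : y ∈ lineThrough P K)
    (hz : z ∈ lineThrough P K) (hxy : x ≠ y) : ∃ t : ℝ, z = x + t • (y - x) := by
  obtain ⟨a, ha⟩ := mem_line_iff.mp hx
  obtain ⟨b, hb⟩ := mem_line_iff.mp hy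
  obtain ⟨c, hc⟩ := mem_line_iff.mp hz
  have hab : b - a ≠ 0 := by
    intro h
    apply hxy
    rw [ha, hb, show b = a by linarith [sub_eq_zero.mp h]]
  refine ⟨(c - a) / (b - a), ?_⟩
  rw [ha, hb, hc]
  have h1 : (P + b • (K - P)) - (P + a • (K - P)) = (b - a) • (K - P) := by
    rw [sub_smul]; abel
  rw [h1, smul_smul, div_mul_cancel₀ _ hab, sub_smul]
  abel

lemma sphere_line {c : Pt} {ρ : ℝ} {x y z : Pt} (hx : dist x c = ρ) (hy : dist y c = ρ)
    (hz : dist z c = ρ) (hxy : x ≠ y) (hzl : z ∈ lineThrough x y) : z = x ∨ z = y := by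
  obtain ⟨t, rfl⟩ := mem_line_iff.mp hzl
  rw [dist_eq_norm] at hx hy hz
  have hx2 : ‖x - c‖ ^ 2 = ρ ^ 2 := by rw [hx]
  have e1 : ‖(x - c) + (y - x)‖ ^ 2 = ρ ^ 2 := by
    rw [show (x - c) + (y - x) = y - c by abel, hy]
  have e3 : ‖(x - c) + t • (y - x)‖ ^ 2 = ρ ^ 2 := by
    rw [show (x - c) + t • (y - x) = x + t • (y - x) - c by abel, hz]
  rw [norm_add_sq_real] at e1 e3
  rw [real_inner_smul_right, norm_smul, Real.norm_eq_abs, mul_pow, sq_abs] at e3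
  have key : t * (t - 1) * ‖y - x‖ ^ 2 = 0 := by linear_combination e3 - t * e1 + (t - 1) * hx2
  have hb : ‖y - x‖ ^ 2 ≠ 0 := pow_ne_zero _ (norm_ne_zero_iff.mpr (sub_ne_zero.mpr hxy.symm))
  rcases mul_eq_zero.mp key with h | h
  · rcases mul_eq_zero.mp h with h' | h'
    · left; rw [h']; simp
    · right; rw [show t = 1 by linarith, one_smul]; abel
  · exact absurd h hb

lemma inter_unique {c : Pt} {ρ : ℝ} {a b d e x y : Pt}
    (ha : dist a c = ρ) (hb : dist b c = ρ) (hd : dist d c = ρ)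
    (hab : a ≠ b) (hda : d ≠ a) (hdb : d ≠ b)
    (hx1 : x ∈ lineThrough a b) (hx2 : x ∈ lineThrough d e)
    (hy1 : y ∈ lineThrough a b) (hy2 : y ∈ lineThrough d e) : x = y := by
  by_contra hxy
  have hdm : d ∈ lineThrough d e := mem_line_iff.mpr ⟨0, by simp⟩
  obtain ⟨t, ht⟩ := reparam hx2 hy2 hdm hxy
  have hdab : d ∈ lineThrough a b := by rw [ht]; exact comb_mem hx1 hy1 t
  rcases sphere_line ha hb hd hab hdab with h | h
  · exact hda h
  · exact hdb h

/-- The key cross-ratio identity in the proof of Pascal'"'"'s Lemma I. -/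
theorem pascal_cross_ratio_identity
    (O₀ : Pt) (ρ : ℝ) (hρ : 0 < ρ)
    (P V N O K Q : Pt)
    (hP : P ∈ Metric.sphere O₀ ρ) (hV : V ∈ Metric.sphere O₀ ρ)
    (hN : N ∈ Metric.sphere O₀ ρ) (hO : O ∈ Metric.sphere O₀ ρ)
    (hK : K ∈ Metric.sphere O₀ ρ) (hQ : Q ∈ Metric.sphere O₀ ρ)
    (hdist : List.Pairwise (· ≠ ·) [P, V, N, O, K, Q])
    (M S A α β : Pt)
    (hM₁ : M ∈ lineThrough P K) (hM₂ : M ∈ lineThrough V O)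
    (hS₁ : S ∈ lineThrough N K) (hS₂ : S ∈ lineThrough V Q)
    (hA₁ : A ∈ lineThrough P K) (hA₂ : A ∈ lineThrough V Q)
    (hα₁ : α ∈ lineThrough N O) (hα₂ : α ∈ lineThrough P K)
    (hβ₁ : β ∈ lineThrough N O) (hβ₂ : β ∈ lineThrough V Q) :
    dist A M * dist α P * dist β S * dist A Q
      = dist α M * dist A P * dist A S * dist β Q := by
  simp only [List.pairwise_cons, List.mem_cons, List.not_mem_nil, or_false,
    List.mem_singleton, forall_eq_or_imp, forall_eq, List.Pairwise.nil, and_true] at hdist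
  obtain ⟨⟨hPV, hPN, hPO, hPK, hPQ⟩, ⟨hVN, hVO, hVK, hVQ⟩, ⟨hNO, hNK, hNQ⟩, ⟨hOK, hOQ⟩, hKQ0⟩ :=
    hdist
  have hKQ : K ≠ Q := hKQ0.1
  have hP' : dist P O₀ = ρ := Metric.mem_sphere.mp hP
  have hV' : dist V O₀ = ρ := Metric.mem_sphere.mp hV
  have hN' : dist N O₀ = ρ := Metric.mem_sphere.mp hN
  have hO' : dist O O₀ = ρ := Metric.mem_sphere.mp hO
  have hK' : dist K O₀ = ρ := Metric.mem_sphere.mp hK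
  have hQ' : dist Q O₀ = ρ := Metric.mem_sphere.mp hQ
  by_cases hAα : A = α
  · -- degenerate case: the three lines are concurrent
    have hβA : β = A := by
      refine inter_unique hN' hO' hV' hNO hVN hVO hβ₁ hβ₂ ?_ hA₂
      rw [hAα]; exact hα₁
    rw [← hAα, hβA]

  · -- main case: A ≠ α ; set up coordinates
    -- membership helpers
    have hPm : P ∈ lineThrough P K := mem_line_iff.mpr ⟨0, by simp⟩
    have hKm : K ∈ lineThrough P K := mem_line_iff.mpr ⟨1, by simp⟩
    have hVm : V ∈ lineThrough V Q := mem_line_iff.mpr ⟨0, by simp⟩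
    have hQm : Q ∈ lineThrough V Q := mem_line_iff.mpr ⟨1, by simp⟩
    have hNm : N ∈ lineThrough N O := mem_line_iff.mpr ⟨0, by simp⟩
    have hOm : O ∈ lineThrough N O := mem_line_iff.mpr ⟨1, by simp⟩
    -- distinctness of the triangle vertices
    have hαβ : α ≠ β := by
      intro h
      exact hAα (inter_unique hP' hK' hV' hPK hPV.symm hVK hA₁ hA₂ hα₂ (h ▸ hβ₂))
    have hAβ : A ≠ β := by
      intro h
      exact hAα (inter_unique hP' hK' hN' hPK hPN.symm hNK hA₁ (h ▸ hβ₁) hα₂ hα₁)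
    -- points of intersection are not on the circle
    have hAP : A ≠ P := fun h => by
      rcases sphere_line hV' hQ' hP' hVQ (h ▸ hA₂) with h' | h'
      exacts [hPV h', hPQ h']
    have hAK : A ≠ K := fun h => by
      rcases sphere_line hV' hQ' hK' hVQ (h ▸ hA₂) with h' | h'
      exacts [hVK h'.symm, hKQ h']
    have hAV : A ≠ V := fun h => by
      rcases sphere_line hP' hK' hV' hPK (h ▸ hA₁) with h' | h'
      exacts [hPV h'.symm, hVK h']
    have hAQ : A ≠ Q := fun h => by
      rcases sphere_line hP' hK' hQ' hPK (h ▸ hA₁) with h' | h'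
      exacts [hPQ h'.symm, hKQ h'.symm]
    have hαP : α ≠ P := fun h => by
      rcases sphere_line hN' hO' hP' hNO (h ▸ hα₁) with h' | h'
      exacts [hPN h', hPO h']
    have hαK : α ≠ K := fun h => by
      rcases sphere_line hN' hO' hK' hNO (h ▸ hα₁) with h' | h'
      exacts [hNK h'.symm, hOK h'.symm]
    have hαN : α ≠ N := fun h => by
      rcases sphere_line hP' hK' hN' hPK (h ▸ hα₂) with h' | h'
      exacts [hPN h'.symm, hNK h']
    have hαO : α ≠ O := fun h => by
      rcases sphere_line hP' hK' hO' hPK (h ▸ hα₂) with h' | h'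
      exacts [hPO h'.symm, hOK h']
    have hβV : β ≠ V := fun h => by
      rcases sphere_line hN' hO' hV' hNO (h ▸ hβ₁) with h' | h'
      exacts [hVN h', hVO h']
    have hβQ : β ≠ Q := fun h => by
      rcases sphere_line hN' hO' hQ' hNO (h ▸ hβ₁) with h' | h'
      exacts [hNQ h'.symm, hOQ h'.symm]
    have hβN : β ≠ N := fun h => by
      rcases sphere_line hV' hQ' hN' hVQ (h ▸ hβ₂) with h' | h'
      exacts [hVN h'.symm, hNQ h']
    have hβO : β ≠ O := fun h => by
      rcases sphere_line hV' hQ' hO' hVQ (h ▸ hβ₂) with h' | h'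
      exacts [hVO h'.symm, hOQ h']
    -- linear independence of α - A and β - A
    have huz : (α - A : Pt) ≠ 0 := sub_ne_zero.mpr (Ne.symm hAα)
    have hvz : (β - A : Pt) ≠ 0 := sub_ne_zero.mpr (Ne.symm hAβ)
    have hwz : (β - α : Pt) ≠ 0 := sub_ne_zero.mpr (Ne.symm hαβ)
    have hind : ∀ a b : ℝ, a • (α - A) + b • (β - A) = (0 : Pt) → a = 0 ∧ b = 0 := by
      intro a b hab
      by_cases hb : b = 0
      · subst hb
        refine ⟨?_, rfl⟩
        rw [zero_smul, add_zero] at hab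
        rcases smul_eq_zero.mp hab with h | h
        · exact h
        · exact absurd h huz
      · exfalso
        have h1 : b • (β - A) = (-a) • (α - A) := by
          linear_combination (norm := module) hab
        have h2 := congrArg (fun z : Pt => b⁻¹ • z) h1
        simp only [smul_smul, inv_mul_cancel₀ hb, one_smul] at h2
        have hβeq : β = A + (b⁻¹ * -a) • (α - A) := by rw [← h2]; abel
        have hβmem : β ∈ lineThrough P K := by
          rw [hβeq]; exact comb_mem hA₁ hα₂ _
        exact hαβ (inter_unique hN' hO' hP' hNO hPN hPO hα₁ hα₂ hβ₁ hβmem)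
    -- coordinates on line PK (direction α - A)
    obtain ⟨p, hPc⟩ := reparam hA₁ hα₂ hPm hAα
    obtain ⟨k, hKc⟩ := reparam hA₁ hα₂ hKm hAα
    obtain ⟨m, hMc⟩ := reparam hA₁ hα₂ hM₁ hAα
    -- coordinates on line VQ (direction β - A)
    obtain ⟨r, hVc⟩ := reparam hA₂ hβ₂ hVm hAβ
    obtain ⟨q, hQc⟩ := reparam hA₂ hβ₂ hQm hAβ
    obtain ⟨s, hSc⟩ := reparam hA₂ hβ₂ hS₂ hAβ
    -- coordinates on line NO (direction β - α)
    obtain ⟨n₁, hNc⟩ := reparam hα₁ hβ₁ hNm hαβ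
    obtain ⟨o₁, hOc⟩ := reparam hα₁ hβ₁ hOm hαβ
    have hαe : α = A + (1:ℝ) • (α - A) := by rw [one_smul]; abel
    have hβe : β = A + (1:ℝ) • (β - A) := by rw [one_smul]; abel
    have hβw : β = α + (1:ℝ) • (β - α) := by rw [one_smul]; abel
    -- nonvanishing of coordinates
    have hp0 : p ≠ 0 := fun h => hAP (by rw [hPc, h]; simp)
    have hk0 : k ≠ 0 := fun h => hAK (by rw [hKc, h]; simp)
    have hr0 : r ≠ 0 := fun h => hAV (by rw [hVc, h]; simp)
    have hq0 : q ≠ 0 := fun h => hAQ (by rw [hQc, h]; simp)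
    have hp1 : p ≠ 1 := fun h => hαP (by rw [hPc, h]; exact hαe)
    have hk1 : k ≠ 1 := fun h => hαK (by rw [hKc, h]; exact hαe)
    have hr1 : r ≠ 1 := fun h => hβV (by rw [hVc, h]; exact hβe)
    have hq1 : q ≠ 1 := fun h => hβQ (by rw [hQc, h]; exact hβe)
    have hn0 : n₁ ≠ 0 := fun h => hαN (by rw [hNc, h]; simp)
    have ho0 : o₁ ≠ 0 := fun h => hαO (by rw [hOc, h]; simp)
    have hn1 : n₁ ≠ 1 := fun h => hβN (by rw [hNc, h]; exact hβw)
    have ho1 : o₁ ≠ 1 := fun h => hβO (by rw [hOc, h]; exact hβw)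
    have hkp : k ≠ p := fun h => hPK (by rw [hPc, hKc, h])
    have hqr : q ≠ r := fun h => hVQ (by rw [hVc, hQc, h])
    have hno : o₁ ≠ n₁ := fun h => hNO (by rw [hNc, hOc, h])
    -- distances in coordinates
    have dc0 : ∀ (x u : Pt) (b : ℝ), dist x (x + b • u) = |b| * ‖u‖ := by
      intro x u b
      have h := dist_coord x u 0 b
      simpa using h
    have dAM : dist A M = |m| * ‖α - A‖ := by rw [hMc]; exact dc0 _ _ _
    have dAP : dist A P = |p| * ‖α - A‖ := by rw [hPc]; exact dc0 _ _ _
    have dAK : dist A K = |k| * ‖α - A‖ := by rw [hKc]; exact dc0 _ _ _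
    have dAV : dist A V = |r| * ‖β - A‖ := by rw [hVc]; exact dc0 _ _ _
    have dAQ : dist A Q = |q| * ‖β - A‖ := by rw [hQc]; exact dc0 _ _ _
    have dAS : dist A S = |s| * ‖β - A‖ := by rw [hSc]; exact dc0 _ _ _
    have dαM : dist α M = |1 - m| * ‖α - A‖ := by
      rw [hMc, dist_eq_norm,
        show α - (A + m • (α - A)) = (1 - m) • (α - A) by module,
        norm_smul, Real.norm_eq_abs]
    have dαP : dist α P = |1 - p| * ‖α - A‖ := by
      rw [hPc, dist_eq_norm,
        show α - (A + p • (α - A)) = (1 - p) • (α - A) by module,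
        norm_smul, Real.norm_eq_abs]
    have dαK : dist α K = |1 - k| * ‖α - A‖ := by
      rw [hKc, dist_eq_norm,
        show α - (A + k • (α - A)) = (1 - k) • (α - A) by module,
        norm_smul, Real.norm_eq_abs]
    have dβV : dist β V = |1 - r| * ‖β - A‖ := by
      rw [hVc, dist_eq_norm,
        show β - (A + r • (β - A)) = (1 - r) • (β - A) by module,
        norm_smul, Real.norm_eq_abs]
    have dβQ : dist β Q = |1 - q| * ‖β - A‖ := by
      rw [hQc, dist_eq_norm,
        show β - (A + q • (β - A)) = (1 - q) • (β - A) by module,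
        norm_smul, Real.norm_eq_abs]
    have dβS : dist β S = |1 - s| * ‖β - A‖ := by
      rw [hSc, dist_eq_norm,
        show β - (A + s • (β - A)) = (1 - s) • (β - A) by module,
        norm_smul, Real.norm_eq_abs]
    have dαN : dist α N = |n₁| * ‖β - α‖ := by rw [hNc]; exact dc0 _ _ _
    have dαO : dist α O = |o₁| * ‖β - α‖ := by rw [hOc]; exact dc0 _ _ _
    have dβN : dist β N = |1 - n₁| * ‖β - α‖ := by
      rw [hNc, dist_eq_norm,
        show β - (α + n₁ • (β - α)) = (1 - n₁) • (β - α) by module,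
        norm_smul, Real.norm_eq_abs]
    have dβO : dist β O = |1 - o₁| * ‖β - α‖ := by
      rw [hOc, dist_eq_norm,
        show β - (α + o₁ • (β - α)) = (1 - o₁) • (β - α) by module,
        norm_smul, Real.norm_eq_abs]
    -- cospherical sets
    have hcos1 : Cospherical ({P, K, V, Q} : Set Pt) := by
      refine (cospherical_def _).mpr ⟨O₀, ρ, ?_⟩
      rintro z hz
      simp only [Set.mem_insert_iff, Set.mem_singleton_iff] at hz
      rcases hz with rfl | rfl | rfl | rfl <;> assumption
    have hcos2 : Cospherical ({P, K, N, O} : Set Pt) := by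
      refine (cospherical_def _).mpr ⟨O₀, ρ, ?_⟩
      rintro z hz
      simp only [Set.mem_insert_iff, Set.mem_singleton_iff] at hz
      rcases hz with rfl | rfl | rfl | rfl <;> assumption
    have hcos3 : Cospherical ({N, O, V, Q} : Set Pt) := by
      refine (cospherical_def _).mpr ⟨O₀, ρ, ?_⟩
      rintro z hz
      simp only [Set.mem_insert_iff, Set.mem_singleton_iff] at hz
      rcases hz with rfl | rfl | rfl | rfl <;> assumption
    -- power of the point A
    have hpow1 : dist P A * dist K A = dist V A * dist Q A := by
      exact mul_dist_eq_mul_dist_of_cospherical hcos1 hA₁ hA₂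
    -- power of the point α
    have eKα : K -ᵥ α = (k - 1) • (α - A) := by
      rw [vsub_eq_sub, hKc, hαe]; module
    have ePα : P -ᵥ α = (p - 1) • (α - A) := by
      rw [vsub_eq_sub, hPc, hαe]; module
    have eNα : N -ᵥ α = n₁ • (β - α) := by
      rw [vsub_eq_sub, hNc]; module
    have eOα : O -ᵥ α = o₁ • (β - α) := by
      rw [vsub_eq_sub, hOc]; module
    have hpow2 : dist P α * dist K α = dist N α * dist O α := by
      exact mul_dist_eq_mul_dist_of_cospherical hcos2 hα₂ hα₁
    -- power of the point β
    have eNβ : N -ᵥ β = (n₁ - 1) • (β - α) := by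
      rw [vsub_eq_sub, hNc, hβw]; module
    have eOβ : O -ᵥ β = (o₁ - 1) • (β - α) := by
      rw [vsub_eq_sub, hOc, hβw]; module
    have eVβ : V -ᵥ β = (r - 1) • (β - A) := by
      rw [vsub_eq_sub, hVc, hβe]; module
    have eQβ : Q -ᵥ β = (q - 1) • (β - A) := by
      rw [vsub_eq_sub, hQc, hβe]; module
    have hpow3 : dist N β * dist O β = dist V β * dist Q β := by
      exact mul_dist_eq_mul_dist_of_cospherical hcos3 hβ₁ hβ₂
    -- squared scalar versions of the power identities
    have hE1 : p^2 * k^2 * (‖α - A‖^2)^2 = r^2 * q^2 * (‖β - A‖^2)^2 := by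
      rw [dist_comm P A, dist_comm K A, dist_comm V A, dist_comm Q A,
        dAP, dAK, dAV, dAQ] at hpow1
      have h2 : (|p| * ‖α - A‖ * (|k| * ‖α - A‖))^2
          = (|r| * ‖β - A‖ * (|q| * ‖β - A‖))^2 := by rw [hpow1]
      calc p^2 * k^2 * (‖α - A‖^2)^2
          = (|p| * ‖α - A‖ * (|k| * ‖α - A‖))^2 := by
            rw [mul_pow, mul_pow, mul_pow, sq_abs, sq_abs]; ring
        _ = (|r| * ‖β - A‖ * (|q| * ‖β - A‖))^2 := h2
        _ = r^2 * q^2 * (‖β - A‖^2)^2 := by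
            rw [mul_pow, mul_pow, mul_pow, sq_abs, sq_abs]; ring
    have hE2 : (1 - p)^2 * (1 - k)^2 * (‖α - A‖^2)^2
        = n₁^2 * o₁^2 * (‖β - α‖^2)^2 := by
      rw [dist_comm P α, dist_comm K α, dist_comm N α, dist_comm O α,
        dαP, dαK, dαN, dαO] at hpow2
      have h2 : (|1 - p| * ‖α - A‖ * (|1 - k| * ‖α - A‖))^2
          = (|n₁| * ‖β - α‖ * (|o₁| * ‖β - α‖))^2 := by rw [hpow2]
      calc (1 - p)^2 * (1 - k)^2 * (‖α - A‖^2)^2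
          = (|1 - p| * ‖α - A‖ * (|1 - k| * ‖α - A‖))^2 := by
            rw [mul_pow, mul_pow, mul_pow, sq_abs, sq_abs]; ring
        _ = (|n₁| * ‖β - α‖ * (|o₁| * ‖β - α‖))^2 := h2
        _ = n₁^2 * o₁^2 * (‖β - α‖^2)^2 := by
            rw [mul_pow, mul_pow, mul_pow, sq_abs, sq_abs]; ring
    have hE3 : (1 - n₁)^2 * (1 - o₁)^2 * (‖β - α‖^2)^2
        = (1 - r)^2 * (1 - q)^2 * (‖β - A‖^2)^2 := by
      rw [dist_comm N β, dist_comm O β, dist_comm V β, dist_comm Q β,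
        dβN, dβO, dβV, dβQ] at hpow3
      have h2 : (|1 - n₁| * ‖β - α‖ * (|1 - o₁| * ‖β - α‖))^2
          = (|1 - r| * ‖β - A‖ * (|1 - q| * ‖β - A‖))^2 := by rw [hpow3]
      calc (1 - n₁)^2 * (1 - o₁)^2 * (‖β - α‖^2)^2
          = (|1 - n₁| * ‖β - α‖ * (|1 - o₁| * ‖β - α‖))^2 := by
            rw [mul_pow, mul_pow, mul_pow, sq_abs, sq_abs]; ring
        _ = (|1 - r| * ‖β - A‖ * (|1 - q| * ‖β - A‖))^2 := h2
        _ = (1 - r)^2 * (1 - q)^2 * (‖β - A‖^2)^2 := by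
            rw [mul_pow, mul_pow, mul_pow, sq_abs, sq_abs]; ring
    -- Menelaus-type relations from the collinearities
    obtain ⟨t, ht⟩ := mem_line_iff.mp hM₂
    rw [hMc, hVc, hOc] at ht
    have hlin1 : (m - t * (1 - o₁)) • (α - A) + (-r - t * (o₁ - r)) • (β - A) = (0 : Pt) := by
      linear_combination (norm := module) ht
    obtain ⟨c1, c2⟩ := hind _ _ hlin1
    have hF1 : m * o₁ - m * r + r - r * o₁ = 0 := by
      linear_combination (o₁ - r) * c1 + (o₁ - 1) * c2
    obtain ⟨t₂, ht₂⟩ := mem_line_iff.mp hS₁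
    rw [hSc, hNc, hKc] at ht₂
    have hlin2 : (n₁ - 1 - t₂ * (k - 1 + n₁)) • (α - A)
        + (s - n₁ + t₂ * n₁) • (β - A) = (0 : Pt) := by
      linear_combination (norm := module) ht₂
    obtain ⟨c3, c4⟩ := hind _ _ hlin2
    have hF2 : s * k - s + s * n₁ - n₁ * k = 0 := by
      linear_combination n₁ * c3 + (k - 1 + n₁) * c4
    -- assemble the algebra
    have hG1 : m * o₁ * (r - 1) = (m - 1) * (o₁ - 1) * r := by linear_combination -hF1
    have hG2 : k * n₁ * (s - 1) = (k - 1) * (n₁ - 1) * s := by linear_combination hF2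
    have hGG : (m * o₁ * (r - 1) * (k * n₁ * (s - 1)))^2
        = ((m - 1) * (o₁ - 1) * r * ((k - 1) * (n₁ - 1) * s))^2 := by rw [hG1, hG2]
    have hbig : (m * (1 - p) * (1 - s) * q)^2
          * (‖β - α‖^2 * (1 - k) * (r - 1) * r * (‖β - A‖^2))^2
        = ((1 - m) * p * s * (1 - q))^2
          * (‖β - α‖^2 * (1 - k) * (r - 1) * r * (‖β - A‖^2))^2 := by
      linear_combination
        (-(m^2 * (1 - p)^2 * (1 - s)^2 * (‖β - α‖^2)^2 * (1 - k)^2 * (r - 1)^2)) * hE1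
        + (m^2 * (1 - s)^2 * (‖β - α‖^2)^2 * (r - 1)^2 * p^2 * k^2) * hE2
        + (p^2 * (‖β - α‖^2)^4) * hGG
        + (p^2 * (‖β - α‖^2)^2 * (m - 1)^2 * (k - 1)^2 * r^2 * s^2) * hE3
    -- cancel the common nonzero factor and conclude
    have hfac : (‖β - α‖^2 * (1 - k) * (r - 1) * r * (‖β - A‖^2)) ≠ 0 := by
      have h1 : ‖β - α‖ ≠ 0 := norm_ne_zero_iff.mpr hwz
      have h2 : ‖β - A‖ ≠ 0 := norm_ne_zero_iff.mpr hvz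
      have h3 : (1 : ℝ) - k ≠ 0 := sub_ne_zero.mpr (Ne.symm hk1)
      have h4 : r - 1 ≠ 0 := sub_ne_zero.mpr hr1
      positivity
    have hT : (m * (1 - p) * (1 - s) * q)^2 = ((1 - m) * p * s * (1 - q))^2 :=
      mul_right_cancel₀ (pow_ne_zero 2 hfac) hbig
    have habs : |m * (1 - p) * (1 - s) * q| = |(1 - m) * p * s * (1 - q)| :=
      (sq_eq_sq_iff_abs_eq_abs _ _).mp hT
    have habs' : |m| * |1 - p| * |1 - s| * |q| = |1 - m| * |p| * |s| * |1 - q| := by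
      simpa [abs_mul] using habs
    rw [dAM, dαP, dβS, dAQ, dαM, dAP, dAS, dβQ]
    linear_combination (‖α - A‖ * ‖α - A‖ * ‖β - A‖ * ‖β - A‖) * habs'
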